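/- Let U = ℝⁿ, Y = ℝᵐ (finite dimensional), G an m×n real matrix, and S a linear subspace of n×m real matrices. Suppose h_G(S ∩ M_G) ⊆ S, where M_G = {K : I - GK invertible} and h_G(K) = -K(I-GK)⁻¹. Then S is quadratically invariant under G, i.e., KGK ∈ S for all K ∈ S. -/
import Mathlib

open Matrix Filter Topology

/-- If `h_G(S ∩ M_G) ⊆ S` for a subspace `S` of `n×m` real matrices, then `S`
is quadratically invariant under `G`: `KGK ∈ S` for all `K ∈ S`. -/
theorem stmt_11 {m n : ℕ} (G : Matrix (Fin m) (Fin n) ℝ)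
    (S : Submodule ℝ (Matrix (Fin n) (Fin m) ℝ))
    (hyp : ∀ K ∈ S, IsUnit (1 - G * K) → -(K * (1 - G * K)⁻¹) ∈ S) :
    ∀ K ∈ S, K * G * K ∈ S := by
  intro K hK
  set A := G * K with hA
  have hclosed : IsClosed (S : Set (Matrix (Fin n) (Fin m) ℝ)) :=
    S.closed_of_finiteDimensional
  have hcontB : Continuous fun t : ℝ => 1 - t • A :=
    continuous_const.sub (continuous_id.smul continuous_const)
  have hcinv : ContinuousAt (fun t : ℝ => (1 - t • A)⁻¹) 0 := by
    have h1 : ContinuousAt Inv.inv ((fun t : ℝ => 1 - t • A) 0) := by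
      apply continuousAt_matrix_inv
      simp only [zero_smul, sub_zero, det_one]
      rw [Ring.inverse_eq_inv']
      exact continuousAt_inv₀ one_ne_zero
    have : ContinuousAt (Inv.inv ∘ fun t : ℝ => 1 - t • A) 0 :=
      ContinuousAt.comp (f := fun t : ℝ => 1 - t • A) (x := 0) h1 hcontB.continuousAt
    exact this
  have hFcont : ContinuousAt (fun t : ℝ => K * (1 - t • A)⁻¹ * A) 0 := by
    have hg : Continuous fun X : Matrix (Fin m) (Fin m) ℝ => K * X * A :=
      (continuous_const.matrix_mul continuous_id).matrix_mul continuous_const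
    have : ContinuousAt ((fun X : Matrix (Fin m) (Fin m) ℝ => K * X * A) ∘
        fun t : ℝ => (1 - t • A)⁻¹) 0 := hg.continuousAt.comp hcinv
    exact this
  have hdet : ContinuousAt (fun t : ℝ => (1 - t • A).det) 0 :=
    (hcontB.matrix_det).continuousAt
  have hev : ∀ᶠ t in 𝓝[≠] (0 : ℝ), IsUnit (1 - t • A) := by
    have h0 : (fun t : ℝ => (1 - t • A).det) 0 ≠ 0 := by simp
    have := hdet.eventually_ne h0
    exact (this.filter_mono nhdsWithin_le_nhds).mono fun t ht =>
      (isUnit_iff_isUnit_det _).2 (isUnit_iff_ne_zero.2 ht)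
  have hmem : ∀ᶠ t in 𝓝[≠] (0 : ℝ), K * (1 - t • A)⁻¹ * A ∈ S := by
    filter_upwards [hev, self_mem_nhdsWithin] with t hu ht
    have ht : t ≠ 0 := ht
    have htK : G * (t • K) = t • A := by rw [Matrix.mul_smul, hA]
    have hu' : IsUnit (1 - G * (t • K)) := by rwa [htK]
    have h1 := hyp (t • K) (S.smul_mem t hK) hu'
    rw [htK] at h1
    have hBdet : IsUnit (1 - t • A).det := (isUnit_iff_isUnit_det _).1 (htK ▸ hu')
    have hBinv : (1 - t • A)⁻¹ = 1 + t • ((1 - t • A)⁻¹ * A) := by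
      have key : (1 - t • A)⁻¹ - 1 = t • ((1 - t • A)⁻¹ * A) := by
        calc (1 - t • A)⁻¹ - 1
            = (1 - t • A)⁻¹ * (1 - (1 - t • A)) := by
              rw [Matrix.mul_sub, Matrix.mul_one, Matrix.nonsing_inv_mul _ hBdet]
          _ = t • ((1 - t • A)⁻¹ * A) := by
              rw [sub_sub_cancel, Matrix.mul_smul]
      linear_combination (norm := module) key
    have h2 : -(t • K * (1 - t • A)⁻¹) + t • K
        = (-(t * t)) • (K * (1 - t • A)⁻¹ * A) := by
      calc -(t • K * (1 - t • A)⁻¹) + t • K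
          = -(t • (K * (1 + t • ((1 - t • A)⁻¹ * A)))) + t • K := by
            rw [← hBinv, Matrix.smul_mul]
        _ = -(t • (K + t • (K * (1 - t • A)⁻¹ * A))) + t • K := by
            rw [Matrix.mul_add, Matrix.mul_one, Matrix.mul_smul, ← Matrix.mul_assoc]
        _ = (-(t * t)) • (K * (1 - t • A)⁻¹ * A) := by
            rw [smul_add, smul_smul, neg_smul]; abel
    have h3 : K * (1 - t • A)⁻¹ * A
        = (-(t * t))⁻¹ • (-(t • K * (1 - t • A)⁻¹) + t • K) := by
      rw [h2, smul_smul, inv_mul_cancel₀ (neg_ne_zero.2 (mul_ne_zero ht ht)), one_smul]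
    rw [h3]
    exact S.smul_mem _ (S.add_mem h1 (S.smul_mem t hK))
  have htend : Tendsto (fun t : ℝ => K * (1 - t • A)⁻¹ * A) (𝓝[≠] (0 : ℝ))
      (𝓝 (K * (1 - (0 : ℝ) • A)⁻¹ * A)) :=
    hFcont.tendsto.mono_left nhdsWithin_le_nhds
  have hF0 : K * (1 - (0 : ℝ) • A)⁻¹ * A ∈ S := hclosed.mem_of_tendsto htend hmem
  have heq : K * (1 - (0 : ℝ) • A)⁻¹ * A = K * G * K := by
    simp [hA, Matrix.mul_assoc]
  rwa [heq] at hF0
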